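/- Let α0 : A → M(B) satisfy the absorption property: for every completely positive contraction φ : A → B there exist W_n ∈ M(B) with W_n* b → 0 for all b ∈ B and W_n* α0(a) W_n → φ(a) for all a ∈ A. Suppose B is stable, i.e., there is a sequence of isometries S_n ∈ M(B) with S_n* b → 0 for all b ∈ B. Then for every completely positive contraction ψ : A ⊕ ℂ → B, setting T_n = V1 W_n + V2 S_n ψ(0,1)^{1/2} (where W_n is chosen for the c.p. contraction a ↦ ψ(a,0)), one has T_n* b → 0 for all b ∈ B and T_n* (V1 α0(a) V1* + λ V2 V2*) T_n → ψ(a, λ) for all (a,λ) ∈ A ⊕ ℂ. -/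
import Mathlib


open scoped MultiplierAlgebra
open Filter Topology

section

variable {X Y : Type*} [NonUnitalCStarAlgebra X] [NonUnitalCStarAlgebra Y]

/-- A completely positive contraction: a linear map of norm at most `1` mapping positive
matrices (of every size) to positive matrices, positivity being expressed by factorizations
`x = y* y`. -/
def IsCPC (φ : X →ₗ[ℂ] Y) : Prop :=
  (∀ x, ‖φ x‖ ≤ ‖x‖) ∧
  ∀ (n : ℕ) (x : Matrix (Fin n) (Fin n) X),
    (∃ y : Matrix (Fin n) (Fin n) X, x = star y * y) → ∃ z : Matrix (Fin n) (Fin n) Y, x.map (⇑φ) = star z * z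

end


section Aux

variable {B : Type*} [NonUnitalCStarAlgebra B]

open scoped MultiplierAlgebra

lemma aux_fst_mul_right (a : 𝓜(ℂ, B)) (b x : B) : a.fst (b * x) = a.fst b * x := by
  have key : ∀ y : B, y * (a.fst (b * x) - a.fst b * x) = 0 := by
    intro y
    have h1 : y * a.fst (b * x) = a.snd y * (b * x) := (a.central y (b * x)).symm
    rw [mul_sub, h1, ← mul_assoc, a.central, mul_assoc, sub_self]
  have h := key (star (a.fst (b * x) - a.fst b * x))
  rw [CStarRing.star_mul_self_eq_zero_iff] at h
  exact sub_eq_zero.mp h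

lemma aux_mul_coe (a : 𝓜(ℂ, B)) (b : B) :
    a * DoubleCentralizer.coeHom (𝕜 := ℂ) b
      = DoubleCentralizer.coeHom (𝕜 := ℂ) (a.fst b) := by
  refine DoubleCentralizer.ext ℂ B _ _ (Prod.ext ?_ ?_)
  · refine ContinuousLinearMap.ext fun x => ?_
    exact aux_fst_mul_right a b x
  · refine ContinuousLinearMap.ext fun x => ?_
    show a.snd x * b = x * a.fst b
    exact a.central x b

end Aux

set_option maxHeartbeats 1000000 in
set_option synthInstance.maxHeartbeats 400000 in
/-- Let `A` be a unital separable C*-algebra, `B` a stable separable C*-algebra, and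
`V₁, V₂` isometries in `𝓜(ℂ, B)` with `V₁V₁* + V₂V₂* = 1` and `V₁*V₂ = 0`.  Let
`α₀ : A → 𝓜(ℂ, B)` satisfy the absorption property: for every completely positive
contraction `φ : A → B` there exist `Wₙ ∈ 𝓜(ℂ, B)` with `Wₙ* b → 0` for all `b ∈ B` and
`Wₙ* α₀(a) Wₙ → φ(a)` for all `a ∈ A`.  Suppose `B` is stable: there is a sequence of
isometries `Sₙ ∈ 𝓜(ℂ, B)` with `Sₙ* b → 0` for all `b ∈ B`.  Then for every completely
positive contraction `ψ : A ⊕ ℂ → B`, setting `Tₙ = V₁ Wₙ + V₂ Sₙ ψ(0,1)^{1/2}` (where the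
`Wₙ` are chosen for the c.p. contraction `a ↦ ψ(a,0)`), one has `Tₙ* b → 0` for all `b ∈ B`
and `Tₙ* (V₁ α₀(a) V₁* + λ V₂V₂*) Tₙ → ψ(a, λ)` for all `(a, λ) ∈ A ⊕ ℂ`. -/
theorem stmt_12 (A B : Type*) [CStarAlgebra A] [NonUnitalCStarAlgebra B]
    [PartialOrder B] [StarOrderedRing B]
    [TopologicalSpace.SeparableSpace A] [TopologicalSpace.SeparableSpace B]
    (V₁ V₂ : 𝓜(ℂ, B)) (h₁ : star V₁ * V₁ = 1) (h₂ : star V₂ * V₂ = 1)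
    (hsum : V₁ * star V₁ + V₂ * star V₂ = 1) (horth : star V₁ * V₂ = 0)
    (α₀ : A →⋆ₙₐ[ℂ] 𝓜(ℂ, B))
    (habs : ∀ φ : A →ₗ[ℂ] B, IsCPC φ → ∃ W : ℕ → 𝓜(ℂ, B),
      (∀ b : B, Tendsto (fun n => star (W n) * DoubleCentralizer.coeHom (𝕜 := ℂ) b)
        atTop (𝓝 0)) ∧
      (∀ a : A, Tendsto (fun n => star (W n) * α₀ a * W n)
        atTop (𝓝 (DoubleCentralizer.coeHom (𝕜 := ℂ) (φ a)))))
    (S : ℕ → 𝓜(ℂ, B)) (hSiso : ∀ n, star (S n) * S n = 1)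
    (hS : ∀ b : B, Tendsto (fun n => star (S n) * DoubleCentralizer.coeHom (𝕜 := ℂ) b)
      atTop (𝓝 0))
    (ψ : A × ℂ →ₗ[ℂ] B) (hψ : IsCPC ψ)
    (W : ℕ → 𝓜(ℂ, B))
    (hW₁ : ∀ b : B, Tendsto (fun n => star (W n) * DoubleCentralizer.coeHom (𝕜 := ℂ) b)
      atTop (𝓝 0))
    (hW₂ : ∀ a : A, Tendsto (fun n => star (W n) * α₀ a * W n)
      atTop (𝓝 (DoubleCentralizer.coeHom (𝕜 := ℂ) (ψ (a, 0)))))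
    (s : B) (hs₀ : 0 ≤ s) (hs : s * s = ψ (0, 1))
    (T : ℕ → 𝓜(ℂ, B))
    (hT : ∀ n, T n = V₁ * W n + V₂ * S n * DoubleCentralizer.coeHom (𝕜 := ℂ) s) :
    (∀ b : B, Tendsto (fun n => star (T n) * DoubleCentralizer.coeHom (𝕜 := ℂ) b)
      atTop (𝓝 0)) ∧
    ∀ (a : A) (lam : ℂ),
      Tendsto (fun n => star (T n) * (V₁ * α₀ a * star V₁ + lam • (V₂ * star V₂)) * T n)
        atTop (𝓝 (DoubleCentralizer.coeHom (𝕜 := ℂ) (ψ (a, lam)))) := by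
  classical
  have hss : star s = s := (IsSelfAdjoint.of_nonneg hs₀)
  have hsc : star (DoubleCentralizer.coeHom (𝕜 := ℂ) s) = DoubleCentralizer.coeHom (𝕜 := ℂ) s := by
    rw [← map_star, hss]
  have horth' : star V₂ * V₁ = 0 := by
    have := congrArg star horth
    simpa [star_mul] using this
  have e₁ : ∀ x : 𝓜(ℂ, B), star V₁ * (V₁ * x) = x := fun x => by
    rw [← mul_assoc, h₁, one_mul]
  have e₂ : ∀ x : 𝓜(ℂ, B), star V₂ * (V₂ * x) = x := fun x => by
    rw [← mul_assoc, h₂, one_mul]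
  have e₁₂ : ∀ x : 𝓜(ℂ, B), star V₁ * (V₂ * x) = 0 := fun x => by
    rw [← mul_assoc, horth, zero_mul]
  have e₂₁ : ∀ x : 𝓜(ℂ, B), star V₂ * (V₁ * x) = 0 := fun x => by
    rw [← mul_assoc, horth', zero_mul]
  have eS : ∀ n, ∀ x : 𝓜(ℂ, B), star (S n) * (S n * x) = x := fun n x => by
    rw [← mul_assoc, hSiso n, one_mul]
  have hTs : ∀ n, star (T n)
      = star (W n) * star V₁
        + DoubleCentralizer.coeHom (𝕜 := ℂ) s * (star (S n) * star V₂) := by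
    intro n
    rw [hT n, star_add, star_mul, star_mul, star_mul, hsc]
  constructor
  · intro b
    set b₁ : B := (star V₁).fst b with hb₁
    set b₂ : B := (star V₂).fst b with hb₂
    have heq : ∀ n, star (T n) * DoubleCentralizer.coeHom (𝕜 := ℂ) b
        = star (W n) * DoubleCentralizer.coeHom (𝕜 := ℂ) b₁
          + DoubleCentralizer.coeHom (𝕜 := ℂ) s
            * (star (S n) * DoubleCentralizer.coeHom (𝕜 := ℂ) b₂) := by
      intro n
      rw [hTs n, add_mul, mul_assoc, aux_mul_coe (star V₁) b, mul_assoc, mul_assoc,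
        aux_mul_coe (star V₂) b]
    have hlim : Tendsto (fun n => star (W n) * DoubleCentralizer.coeHom (𝕜 := ℂ) b₁
        + DoubleCentralizer.coeHom (𝕜 := ℂ) s
          * (star (S n) * DoubleCentralizer.coeHom (𝕜 := ℂ) b₂)) atTop (𝓝 0) := by
      have h2 := (hS b₂).const_mul (DoubleCentralizer.coeHom (𝕜 := ℂ) s)
      have h := (hW₁ b₁).add h2
      simpa using h
    exact hlim.congr fun n => (heq n).symm
  · intro a lam
    have expand : ∀ n,
        star (T n) * (V₁ * α₀ a * star V₁ + lam • (V₂ * star V₂)) * T n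
          = star (W n) * α₀ a * W n
            + lam • (DoubleCentralizer.coeHom (𝕜 := ℂ) s
                * DoubleCentralizer.coeHom (𝕜 := ℂ) s) := by
      intro n
      rw [hTs n, hT n]
      simp only [mul_add, add_mul, smul_mul_assoc, mul_smul_comm, mul_assoc,
        e₁, e₂, e₁₂, e₂₁, eS, mul_zero, zero_mul, add_zero, zero_add, smul_zero]
    have hψeq : ψ (a, lam) = ψ (a, 0) + lam • ψ (0, 1) := by
      have hp : (a, lam) = (a, (0 : ℂ)) + lam • ((0 : A), (1 : ℂ)) := by
        simp [Prod.ext_iff]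
      rw [hp, map_add, map_smul]
    have hlim : Tendsto (fun n => star (W n) * α₀ a * W n
        + lam • (DoubleCentralizer.coeHom (𝕜 := ℂ) s
            * DoubleCentralizer.coeHom (𝕜 := ℂ) s)) atTop
        (𝓝 (DoubleCentralizer.coeHom (𝕜 := ℂ) (ψ (a, 0))
          + lam • (DoubleCentralizer.coeHom (𝕜 := ℂ) s
              * DoubleCentralizer.coeHom (𝕜 := ℂ) s))) :=
      (hW₂ a).add tendsto_const_nhds
    have hval : DoubleCentralizer.coeHom (𝕜 := ℂ) (ψ (a, 0))
        + lam • (DoubleCentralizer.coeHom (𝕜 := ℂ) s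
            * DoubleCentralizer.coeHom (𝕜 := ℂ) s)
        = DoubleCentralizer.coeHom (𝕜 := ℂ) (ψ (a, lam)) := by
      rw [hψeq, map_add, map_smul, ← map_mul, hs]
    rw [← hval]
    exact hlim.congr fun n => (expand n).symm
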